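/- Let f : E → [0,∞] be upper semicontinuous and strictly upper radial, let s > 0 and D ≥ 0, and suppose every x ∈ E with f(x) ≥ s satisfies ‖x‖ ≤ D. Then every y ∈ E with f^Γ(y) ≤ 1/s satisfies ‖y‖ ≤ D/s. -/

import Mathlib

open scoped ENNReal RealInnerProductSpace Pointwise
open Metric Set Filter Topology

variable {E : Type*} [NormedAddCommGroup E] [InnerProductSpace ℝ E] [FiniteDimensional ℝ E]

/-- The hypograph of `f`, viewed inside `E × (0,∞)`. -/
def hypo (f : E → ℝ≥0∞) : Set (E × ℝ) := {p | 0 < p.2 ∧ ENNReal.ofReal p.2 ≤ f p.1}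

/-- The epigraph of `f`, viewed inside `E × (0,∞)`. -/
def epigraph (f : E → ℝ≥0∞) : Set (E × ℝ) := {p | 0 < p.2 ∧ f p.1 ≤ ENNReal.ofReal p.2}

/-- `f` is upper semicontinuous: its hypograph is closed in `E × (0,∞)`. -/
def IsUSC (f : E → ℝ≥0∞) : Prop := closure (hypo f) ∩ {p : E × ℝ | 0 < p.2} ⊆ hypo f

/-- The perspective function `(y, v) ↦ v ⬝ f(y/v)`. -/
noncomputable def persp (f : E → ℝ≥0∞) (p : E × ℝ) : ℝ≥0∞ :=
  ENNReal.ofReal p.2 * f (p.2⁻¹ • p.1)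

/-- `f` is upper radial: its perspective function is u.s.c. on `E × (0,∞)` and
nondecreasing in `v`. -/
def UpperRadial (f : E → ℝ≥0∞) : Prop :=
  UpperSemicontinuousOn (persp f) {p : E × ℝ | 0 < p.2} ∧
  ∀ (y : E) (v v' : ℝ), 0 < v → v ≤ v' → persp f (y, v) ≤ persp f (y, v')

/-- `f` is strictly upper radial. -/
def StrictlyUpperRadial (f : E → ℝ≥0∞) : Prop :=
  UpperRadial f ∧ ∀ (y : E) (v v' : ℝ), 0 < v → v < v' →
    0 < persp f (y, v) → persp f (y, v) < ⊤ → persp f (y, v) < persp f (y, v')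

/-- The upper radial transformation `f^Γ(y) = sup{v > 0 : v ⬝ f(y/v) ≤ 1}` (`sup ∅ = 0`). -/
noncomputable def radial (f : E → ℝ≥0∞) (y : E) : ℝ≥0∞ :=
  ⨆ (v : ℝ) (_ : 0 < v ∧ persp f (y, v) ≤ 1), ENNReal.ofReal v

/-- The Euclidean norm on `E × ℝ`. -/
noncomputable def pnorm (p : E × ℝ) : ℝ := Real.sqrt (‖p.1‖ ^ 2 + p.2 ^ 2)

/-- `w` is a proximal normal to `S` at `z ∈ S`: `dist(z + ε w, S) = ε ‖w‖` for some `ε > 0`,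
with the Euclidean distance on `E × ℝ`. -/
def IsProxNormal (S : Set (E × ℝ)) (z w : E × ℝ) : Prop :=
  z ∈ S ∧ ∃ ε : ℝ, 0 < ε ∧ sInf ((fun q => pnorm (z + ε • w - q)) '' S) = ε * pnorm w

/-- `R(f)`: the infimum of `‖x'‖` over points on hyperplanes induced by proximal normals of
the hypograph (`inf ∅ = ∞`). -/
noncomputable def Rrad (f : E → ℝ≥0∞) : ℝ≥0∞ :=
  ⨅ (x' : E) (_ : ∃ p w, IsProxNormal (hypo f) p w ∧
    ⟪w.1, x'⟫ = ⟪w.1, p.1⟫ + w.2 * p.2), ENNReal.ofReal ‖x'‖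

/-- `D(f) = sup{‖x‖ : 0 < f(x) < ∞}`. -/
noncomputable def Drad (f : E → ℝ≥0∞) : ℝ≥0∞ :=
  ⨆ (x : E) (_ : 0 < f x ∧ f x < ⊤), ENNReal.ofReal ‖x‖

/-- The proximal subdifferential of `f` at `x` (empty unless `f x ∈ (0,∞)`). -/
def subdiffP (f : E → ℝ≥0∞) (x : E) : Set E :=
  {ζ | 0 < f x ∧ f x < ⊤ ∧ IsProxNormal (epigraph f) (x, (f x).toReal) (ζ, -1)}

/-- The proximal supdifferential of `f` at `x` (empty unless `f x ∈ (0,∞)`). -/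
def supdiffP (f : E → ℝ≥0∞) (x : E) : Set E :=
  {ζ | 0 < f x ∧ f x < ⊤ ∧ IsProxNormal (hypo f) (x, (f x).toReal) (-ζ, 1)}

/-- `ζ` is a subgradient of `g` at `y`: `g(z) ≥ g(y) + ⟨ζ, z - y⟩` for all `z`. -/
def IsSubgrad (g : E → ℝ≥0∞) (y ζ : E) : Prop :=
  ∀ z : E, (g y : EReal) + ((⟪ζ, z - y⟫ : ℝ) : EReal) ≤ (g z : EReal)

/-- The Minkowski gauge `γ_S(y) = inf{λ > 0 : y ∈ λ S}` (`inf ∅ = ∞`). -/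
noncomputable def gaugeE (S : Set E) (y : E) : ℝ≥0∞ :=
  ⨅ (lam : ℝ) (_ : 0 < lam ∧ y ∈ lam • S), ENNReal.ofReal lam

/-- The indicator `ι_S` taking value `∞` on `S` and `0` elsewhere. -/
noncomputable def indic (S : Set E) (x : E) : ℝ≥0∞ := S.indicator (fun _ => (⊤ : ℝ≥0∞)) x

/-- bounded super-level sets of `f` bound sub-level sets of `f^Γ`. -/
theorem statement18 (f : E → ℝ≥0∞) (husc : IsUSC f) (hsur : StrictlyUpperRadial f)
    (s D : ℝ) (hs : 0 < s) (hD : 0 ≤ D)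
    (hlev : ∀ x : E, ENNReal.ofReal s ≤ f x → ‖x‖ ≤ D) :
    ∀ y : E, radial f y ≤ ENNReal.ofReal (1 / s) → ‖y‖ ≤ D / s := by
  intro y hy
  by_contra hgt
  push_neg at hgt
  have hsy : D < ‖s • y‖ := by
    rw [norm_smul, Real.norm_eq_abs, abs_of_pos hs]
    exact (div_lt_iff₀' hs).mp hgt
  have hf : f (s • y) < ENNReal.ofReal s := by
    by_contra h
    push_neg at h
    exact absurd (hlev _ h) (not_le.2 hsy)
  have hls : (0 : ℝ) < 1 / s := by positivity
  have hp0 : persp f (y, 1 / s) < 1 := by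
    have hy' : (1 / s : ℝ)⁻¹ • y = s • y := by rw [one_div, inv_inv]
    have h1 : ENNReal.ofReal (1 / s) * f (s • y) <
        ENNReal.ofReal (1 / s) * ENNReal.ofReal s := by
      rw [ENNReal.mul_lt_mul_iff_right (ENNReal.ofReal_pos.mpr hls).ne' ENNReal.ofReal_ne_top]
      exact hf
    have h2 : ENNReal.ofReal (1 / s) * ENNReal.ofReal s = 1 := by
      rw [← ENNReal.ofReal_mul hls.le, one_div, inv_mul_cancel₀ hs.ne']
      simp
    unfold persp
    simp only
    rw [hy', ← h2]
    exact h1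
  have hopen : IsOpen {p : E × ℝ | 0 < p.2} := isOpen_lt continuous_const continuous_snd
  have hmem : (y, (1 / s : ℝ)) ∈ {p : E × ℝ | 0 < p.2} := hls
  have husc' := hsur.1.1 _ hmem 1 hp0
  rw [nhdsWithin_eq_nhds.mpr (hopen.mem_nhds hmem)] at husc'
  have hcont : ContinuousAt (fun t : ℝ => ((y, t) : E × ℝ)) (1 / s) :=
    (continuous_const.prodMk continuous_id).continuousAt
  have hev : ∀ᶠ t in 𝓝 (1 / s), persp f (y, t) < 1 := hcont.eventually husc'
  have hev' : ∀ᶠ t in 𝓝[>] (1 / s), persp f (y, t) < 1 ∧ 1 / s < t :=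
    (hev.filter_mono nhdsWithin_le_nhds).and self_mem_nhdsWithin
  obtain ⟨t, hpt, hts⟩ := hev'.exists
  have ht0 : (0 : ℝ) < t := hls.trans hts
  have hle : ENNReal.ofReal t ≤ radial f y :=
    le_iSup₂ (f := fun (v : ℝ) (_ : 0 < v ∧ persp f (y, v) ≤ 1) => ENNReal.ofReal v)
      t ⟨ht0, hpt.le⟩
  have : ENNReal.ofReal t ≤ ENNReal.ofReal (1 / s) := hle.trans hy
  exact absurd this (not_le.2 ((ENNReal.ofReal_lt_ofReal_iff ht0).mpr hts))
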